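/- Let W be the lazy random walk on a finite simple connected regular graph G = (V,E), started from the uniform stationary distribution π. Fix s ≥ t_mix + 1 and a finite interval A ⊂ ℕ_0 with #A ≥ 2s+1. Then E_π[# R^W(NE^{W,s}(A))] ≥ E_π[# NE^{W,s}(A)] − 2(#A − 2s)²/#V; i.e., the number of distinct vertices in the locally non-erased path differs from the number of locally non-erased indices by at most 2(#A−2s)²/#V in expectation. -/

import Mathlib

open Finset

variable {V : Type*} [Fintype V] [DecidableEq V] [Nonempty V]

/-- One-step transition kernel of the lazy random walk on `G`:
stay put with probability `1/2`, otherwise move to a uniformly chosen neighbour. -/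
noncomputable def lazyStep (G : SimpleGraph V) [DecidableRel G.Adj] (x y : V) : ℝ :=
  if x = y then 1 / 2 else if G.Adj x y then 1 / (2 * (G.degree x : ℝ)) else 0

/-- `n`-step transition probabilities of the lazy random walk. -/
noncomputable def lazyProb (G : SimpleGraph V) [DecidableRel G.Adj] : ℕ → V → V → ℝ
  | 0, x, y => if x = y then 1 else 0
  | n + 1, x, y => ∑ z : V, lazyStep G x z * lazyProb G n z y

/-- The stationary (degree-biased) distribution `π(x) = deg(x)/(2#E)`. -/
noncomputable def statDist (G : SimpleGraph V) [DecidableRel G.Adj] (x : V) : ℝ :=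
  (G.degree x : ℝ) / (2 * (G.edgeFinset.card : ℝ))

/-- The uniform `(ℓ∞, 1/4)` mixing time. -/
noncomputable def tmix (G : SimpleGraph V) [DecidableRel G.Adj] : ℕ :=
  sInf {n : ℕ | ∀ x y : V, |lazyProb G n x y / statDist G y - 1| ≤ 1 / 4}

/-- Extension of a finite path to all of `ℕ` (constant after time `N`). -/
def extPath (N : ℕ) (γ : Fin (N + 1) → V) : ℕ → V :=
  fun n => γ ⟨min n N, Nat.lt_succ_of_le (min_le_right n N)⟩

/-- Weight of a finite path under the lazy random walk kernel. -/
noncomputable def pathWeight (G : SimpleGraph V) [DecidableRel G.Adj]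
    (N : ℕ) (γ : Fin (N + 1) → V) : ℝ :=
  ∏ i ∈ Finset.range N, lazyStep G (extPath N γ i) (extPath N γ (i + 1))

open Classical in
/-- Probability, for the lazy random walk started at `ρ`, of a path event
depending only on the first `N+1` coordinates. -/
noncomputable def walkProb (G : SimpleGraph V) [DecidableRel G.Adj]
    (ρ : V) (N : ℕ) (E : (ℕ → V) → Prop) : ℝ :=
  ∑ γ : Fin (N + 1) → V,
    if extPath N γ 0 = ρ ∧ E (extPath N γ) then pathWeight G N γ else 0

open Classical in
/-- Expectation, for the lazy random walk started at `ρ`, of a path functional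
depending only on the first `N+1` coordinates. -/
noncomputable def walkExp (G : SimpleGraph V) [DecidableRel G.Adj]
    (ρ : V) (N : ℕ) (f : (ℕ → V) → ℝ) : ℝ :=
  ∑ γ : Fin (N + 1) → V,
    if extPath N γ 0 = ρ then pathWeight G N γ * f (extPath N γ) else 0

open Classical in
/-- Probability of a path event for the lazy random walk started from `π`. -/
noncomputable def walkProbStat (G : SimpleGraph V) [DecidableRel G.Adj]
    (N : ℕ) (E : (ℕ → V) → Prop) : ℝ :=
  ∑ γ : Fin (N + 1) → V,
    if E (extPath N γ) then statDist G (extPath N γ 0) * pathWeight G N γ else 0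

/-- Expectation of a path functional for the lazy random walk started from `π`. -/
noncomputable def walkExpStat (G : SimpleGraph V) [DecidableRel G.Adj]
    (N : ℕ) (f : (ℕ → V) → ℝ) : ℝ :=
  ∑ γ : Fin (N + 1) → V,
    statDist G (extPath N γ 0) * pathWeight G N γ * f (extPath N γ)

open Classical in
/-- Probability of a joint event for two independent lazy random walks,
each started from the stationary distribution. -/
noncomputable def twoWalkProbStat (G : SimpleGraph V) [DecidableRel G.Adj]
    (N : ℕ) (E : (ℕ → V) → (ℕ → V) → Prop) : ℝ :=
  ∑ γ₁ : Fin (N + 1) → V, ∑ γ₂ : Fin (N + 1) → V,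
    if E (extPath N γ₁) (extPath N γ₂) then
      (statDist G (extPath N γ₁ 0) * pathWeight G N γ₁) *
      (statDist G (extPath N γ₂ 0) * pathWeight G N γ₂) else 0

open Classical in
/-- Probability of a joint event for two independent lazy random walks,
both started at the vertex `ρ`. -/
noncomputable def twoWalkProbFrom (G : SimpleGraph V) [DecidableRel G.Adj]
    (ρ : V) (N : ℕ) (E : (ℕ → V) → (ℕ → V) → Prop) : ℝ :=
  ∑ γ₁ : Fin (N + 1) → V, ∑ γ₂ : Fin (N + 1) → V,
    if extPath N γ₁ 0 = ρ ∧ extPath N γ₂ 0 = ρ ∧ E (extPath N γ₁) (extPath N γ₂) then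
      pathWeight G N γ₁ * pathWeight G N γ₂ else 0

/-- Range of a path over a finite set of times. -/
def walkRange (w : ℕ → V) (A : Finset ℕ) : Finset V := A.image w

/-- `q̄^G(s)`: averaged intersection probability of two independent lazy walks
started at the same (uniform) vertex. -/
noncomputable def qbar (G : SimpleGraph V) [DecidableRel G.Adj] (s : ℕ) : ℝ :=
  (1 / (Fintype.card V : ℝ)) * ∑ ρ : V,
    twoWalkProbFrom G ρ s (fun w₁ w₂ =>
      (walkRange w₁ (Finset.Icc 0 s) ∩ walkRange w₂ (Finset.Icc 1 s)).Nonempty)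

/-- `H^W_ρ(m) = Σ_{i=0}^m Σ_{j=0}^m P_ρ(W(i+j)=ρ)`. -/
noncomputable def HW (G : SimpleGraph V) [DecidableRel G.Adj] (ρ : V) (m : ℕ) : ℝ :=
  ∑ i ∈ Finset.range (m + 1), ∑ j ∈ Finset.range (m + 1), lazyProb G (i + j) ρ ρ

open Classical in
/-- Non-erased time indices of the chronological loop erasure of a path on the
interval starting at `a`: `NEseg w a k` is `NE^{w,[a,·]}(a+k)`. -/
noncomputable def NEseg (w : ℕ → V) (a : ℕ) : ℕ → Finset ℕ
  | 0 => {a}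
  | k + 1 =>
      (NEseg w a k).filter (fun m =>
        w (a + k + 1) ∉ ((NEseg w a k).filter (fun h => h ≤ m)).image w) ∪ {a + k + 1}

open Classical in
/-- `(A,s)`-locally non-erased time indices for `A = [a,b]`:
indices `m ∈ [a+s, b-s]` such that the range of the locally loop-erased segment
`NE^{w,[m-s,m]}(m)` does not meet the range of `w` on `[m+1,m+s]`. -/
noncomputable def NEloc (w : ℕ → V) (s a b : ℕ) : Finset ℕ :=
  (Finset.Icc (a + s) (b - s)).filter (fun m =>
    walkRange w (NEseg w (m - s) s) ∩ walkRange w (Finset.Icc (m + 1) (m + s)) = ∅)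

set_option linter.unusedSectionVars false
section Basics
variable (G : SimpleGraph V) [DecidableRel G.Adj]

lemma lazyStep_nonneg (x y : V) : 0 ≤ lazyStep G x y := by
  unfold lazyStep
  split_ifs
  · norm_num
  · apply div_nonneg <;> positivity
  · exact le_rfl

lemma lazyStep_self (x : V) : lazyStep G x x = 1 / 2 := by simp [lazyStep]

variable {d : ℕ} (hreg : G.IsRegularOfDegree d) (hd : 0 < d)

include hreg in
lemma lazyStep_symm (x y : V) : lazyStep G x y = lazyStep G y x := by
  unfold lazyStep
  by_cases h : x = y
  · simp [h]
  · rw [if_neg h, if_neg (Ne.symm h)]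
    by_cases ha : G.Adj x y
    · rw [if_pos ha, if_pos ha.symm, hreg x, hreg y]
    · rw [if_neg ha, if_neg fun h' => ha h'.symm]

include hreg hd in
lemma lazyStep_row (x : V) : ∑ y, lazyStep G x y = 1 := by
  classical
  rw [← Finset.add_sum_erase _ _ (mem_univ x), lazyStep_self]
  have h1 : ∀ y ∈ univ.erase x, lazyStep G x y = if G.Adj x y then 1 / (2 * (d : ℝ)) else 0 := by
    intro y hy
    rw [Finset.mem_erase] at hy
    unfold lazyStep
    rw [if_neg (Ne.symm hy.1), hreg x]
  rw [Finset.sum_congr rfl h1, ← Finset.sum_filter]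
  have h2 : (univ.erase x).filter (G.Adj x) = G.neighborFinset x := by
    ext y
    simp only [Finset.mem_filter, Finset.mem_erase, Finset.mem_univ, true_and,
      SimpleGraph.mem_neighborFinset, and_iff_right_iff_imp]
    exact fun h => ⟨(G.ne_of_adj h).symm, trivial⟩
  rw [h2, Finset.sum_const, SimpleGraph.card_neighborFinset_eq_degree, hreg x, nsmul_eq_mul]
  have : (d : ℝ) ≠ 0 := Nat.cast_ne_zero.mpr hd.ne'
  field_simp
  ring

lemma lazyProb_nonneg (n : ℕ) (x y : V) : 0 ≤ lazyProb G n x y := by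
  induction n generalizing x y with
  | zero => unfold lazyProb; split <;> norm_num
  | succ n ih =>
    unfold lazyProb
    exact Finset.sum_nonneg fun z _ => mul_nonneg (lazyStep_nonneg G x z) (ih z y)

include hreg hd in
lemma lazyProb_row (n : ℕ) (x : V) : ∑ y, lazyProb G n x y = 1 := by
  induction n generalizing x with
  | zero => simp [lazyProb]
  | succ n ih =>
    unfold lazyProb
    rw [Finset.sum_comm]
    calc ∑ z, ∑ y, lazyStep G x z * lazyProb G n z y
        = ∑ z : V, lazyStep G x z * 1 := by
          refine Finset.sum_congr rfl fun z _ => ?_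
          rw [← Finset.mul_sum, ih z]
      _ = 1 := by simpa using lazyStep_row G hreg hd x

lemma lazyProb_succ_right (n : ℕ) (x y : V) :
    lazyProb G (n + 1) x y = ∑ z, lazyProb G n x z * lazyStep G z y := by
  induction n generalizing x y with
  | zero =>
    show (∑ z, lazyStep G x z * lazyProb G 0 z y) = _
    simp [lazyProb, ite_mul, mul_ite]
  | succ n ih =>
    show (∑ z, lazyStep G x z * lazyProb G (n+1) z y) = _
    calc (∑ z, lazyStep G x z * lazyProb G (n+1) z y)
        = ∑ z, ∑ w, lazyStep G x z * (lazyProb G n z w * lazyStep G w y) := by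
          refine Finset.sum_congr rfl fun z _ => ?_
          rw [ih z y, Finset.mul_sum]
      _ = ∑ w, (∑ z, lazyStep G x z * lazyProb G n z w) * lazyStep G w y := by
          rw [Finset.sum_comm]
          exact Finset.sum_congr rfl fun w _ => by
            rw [Finset.sum_mul]; exact Finset.sum_congr rfl fun z _ => by ring
      _ = _ := rfl

include hreg in
lemma lazyProb_symm (n : ℕ) (x y : V) : lazyProb G n x y = lazyProb G n y x := by
  induction n generalizing x y with
  | zero => simp [lazyProb, eq_comm]
  | succ n ih =>
    rw [lazyProb_succ_right]
    show _ = ∑ z, lazyStep G y z * lazyProb G n z x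
    refine Finset.sum_congr rfl fun z _ => ?_
    rw [ih x z, lazyStep_symm G hreg z y, mul_comm]

include hreg hd in
lemma lazyProb_col (n : ℕ) (y : V) : ∑ x, lazyProb G n x y = 1 := by
  calc ∑ x, lazyProb G n x y = ∑ x, lazyProb G n y x :=
        Finset.sum_congr rfl fun x _ => lazyProb_symm G hreg n x y
    _ = 1 := lazyProb_row G hreg hd n y

lemma lazyProb_chapman (m n : ℕ) (x y : V) :
    lazyProb G (m + n) x y = ∑ z, lazyProb G m x z * lazyProb G n z y := by
  induction m generalizing x with
  | zero => simp [lazyProb, ite_mul]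
  | succ m ih =>
    have : m + 1 + n = (m + n) + 1 := by omega
    rw [this]
    show (∑ z, lazyStep G x z * lazyProb G (m + n) z y) = _
    calc (∑ z, lazyStep G x z * lazyProb G (m + n) z y)
        = ∑ z, ∑ w, lazyStep G x z * (lazyProb G m z w * lazyProb G n w y) := by
          refine Finset.sum_congr rfl fun z _ => ?_
          rw [ih z, Finset.mul_sum]
      _ = ∑ w, (∑ z, lazyStep G x z * lazyProb G m z w) * lazyProb G n w y := by
          rw [Finset.sum_comm]
          exact Finset.sum_congr rfl fun w _ => by
            rw [Finset.sum_mul]; exact Finset.sum_congr rfl fun z _ => by ring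
      _ = _ := rfl

include hreg hd in
lemma lazyProb_le_one (n : ℕ) (x y : V) : lazyProb G n x y ≤ 1 := by
  calc lazyProb G n x y ≤ ∑ z, lazyProb G n x z :=
        Finset.single_le_sum (fun z _ => lazyProb_nonneg G n x z) (mem_univ y)
    _ = 1 := lazyProb_row G hreg hd n x

lemma lazyProb_half_le (n : ℕ) (x y : V) :
    (1 / 2) * lazyProb G n x y ≤ lazyProb G (n + 1) x y := by
  have := Finset.single_le_sum
    (f := fun z => lazyStep G x z * lazyProb G n z y)
    (fun z _ => mul_nonneg (lazyStep_nonneg G x z) (lazyProb_nonneg G n z y)) (mem_univ x)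
  show (1 / 2) * lazyProb G n x y ≤ ∑ z, lazyStep G x z * lazyProb G n z y
  simpa [lazyStep_self] using this

end Basics

section Mixing
variable (G : SimpleGraph V) [DecidableRel G.Adj]
variable {d : ℕ}

lemma lazyProb_pos_of_walk (hd : 0 < d) (hreg : G.IsRegularOfDegree d) {x y : V}
    (W : G.Walk x y) : 0 < lazyProb G W.length x y := by
  induction W with
  | nil => simp [lazyProb]
  | @cons u v w h W ih =>
    rw [SimpleGraph.Walk.length_cons]
    have hstep : 0 < lazyStep G u v := by
      unfold lazyStep
      rw [if_neg (G.ne_of_adj h), if_pos h, hreg u]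
      positivity
    have hterm : 0 < lazyStep G u v * lazyProb G W.length v w := mul_pos hstep ih
    calc (0 : ℝ) < lazyStep G u v * lazyProb G W.length v w := hterm
      _ ≤ ∑ z, lazyStep G u z * lazyProb G W.length z w :=
          Finset.single_le_sum
            (fun z _ => mul_nonneg (lazyStep_nonneg G u z) (lazyProb_nonneg G _ z w))
            (mem_univ v)
      _ = lazyProb G (W.length + 1) u w := rfl

lemma lazyProb_pos_mono {n m : ℕ} (h : n ≤ m) {x y : V}
    (hp : 0 < lazyProb G n x y) : 0 < lazyProb G m x y := by
  induction m, h using Nat.le_induction with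
  | base => exact hp
  | succ m hm ih =>
    calc (0:ℝ) < (1/2) * lazyProb G m x y := by positivity
      _ ≤ lazyProb G (m+1) x y := lazyProb_half_le G m x y

lemma exists_mix (hconn : G.Connected) (hreg : G.IsRegularOfDegree d) (hd : 0 < d) :
    ∃ n, ∀ x y : V, |(Fintype.card V : ℝ) * lazyProb G n x y - 1| ≤ 1 / 4 := by
  classical
  have key : ∀ x y : V, ∃ L, ∀ n, L ≤ n → 0 < lazyProb G n x y := by
    intro x y
    obtain ⟨W⟩ := hconn.preconnected x y
    exact ⟨W.length, fun n hn => lazyProb_pos_mono G hn (lazyProb_pos_of_walk G hd hreg W)⟩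
  choose L hL using key
  set n0 : ℕ := Finset.univ.sup (fun pq : V × V => L pq.1 pq.2) with hn0
  have hpos : ∀ x y : V, 0 < lazyProb G n0 x y := fun x y =>
    hL x y n0 (Finset.le_sup (f := fun pq : V × V => L pq.1 pq.2) (mem_univ (x, y)))
  obtain ⟨pq, -, hpq⟩ := Finset.exists_min_image (univ : Finset (V × V))
    (fun pq => lazyProb G n0 pq.1 pq.2) ⟨(Classical.arbitrary V, Classical.arbitrary V), mem_univ _⟩
  set δ : ℝ := lazyProb G n0 pq.1 pq.2 with hδ
  have hδpos : 0 < δ := hpos _ _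
  have hδle : ∀ x y : V, δ ≤ lazyProb G n0 x y := fun x y => hpq (x, y) (mem_univ _)
  set K : ℝ := (Fintype.card V : ℝ) with hKdef
  have hK : 0 < K := by
    have := Fintype.card_pos (α := V); positivity
  set q : ℝ := δ * K with hq
  have hq0 : 0 < q := by positivity
  have hq1 : q ≤ 1 := by
    have : ∑ _z : V, δ ≤ ∑ z, lazyProb G n0 pq.1 z :=
      Finset.sum_le_sum fun z _ => hδle _ _
    rw [Finset.sum_const, card_univ, lazyProb_row G hreg hd, nsmul_eq_mul] at this
    calc q = K * δ := by rw [hq]; ring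
      _ ≤ 1 := this
  -- contraction
  have contr : ∀ r : ℕ, ∀ x x' y : V,
      lazyProb G (r * n0) x y - lazyProb G (r * n0) x' y ≤ (1 - q) ^ r := by
    intro r
    induction r with
    | zero =>
      intro x x' y
      simp only [Nat.zero_mul, pow_zero]
      have h1 := lazyProb_le_one G hreg hd 0 x y
      have h2 := lazyProb_nonneg G 0 x' y
      linarith
    | succ r ih =>
      intro x x' y
      have hsplit : (r + 1) * n0 = n0 + r * n0 := by ring
      rw [hsplit, lazyProb_chapman G n0 (r * n0) x y, lazyProb_chapman G n0 (r * n0) x' y]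
      obtain ⟨z0, -, hz0⟩ := Finset.exists_min_image (univ : Finset V)
        (fun z => lazyProb G (r * n0) z y) ⟨Classical.arbitrary V, mem_univ _⟩
      set m : ℝ := lazyProb G (r * n0) z0 y with hm
      have hub : ∀ z : V, lazyProb G (r * n0) z y ≤ m + (1 - q) ^ r := by
        intro z
        have := ih z z0 y
        linarith
      have hlb : ∀ z : V, m ≤ lazyProb G (r * n0) z y := fun z => hz0 z (mem_univ z)
      have e1 : ∀ x'' : V, ∑ z, lazyProb G n0 x'' z * lazyProb G (r * n0) z y
          = (∑ z, (lazyProb G n0 x'' z - δ) * lazyProb G (r * n0) z y)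
            + δ * ∑ z, lazyProb G (r * n0) z y := by
        intro x''
        rw [Finset.mul_sum, ← Finset.sum_add_distrib]
        exact Finset.sum_congr rfl fun z _ => by ring
      rw [e1 x, e1 x']
      have hA : ∑ z, (lazyProb G n0 x z - δ) * lazyProb G (r * n0) z y
          ≤ (1 - q) * (m + (1 - q) ^ r) := by
        calc ∑ z, (lazyProb G n0 x z - δ) * lazyProb G (r * n0) z y
            ≤ ∑ z, (lazyProb G n0 x z - δ) * (m + (1 - q) ^ r) :=
              Finset.sum_le_sum fun z _ =>
                mul_le_mul_of_nonneg_left (hub z) (by have := hδle x z; linarith)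
          _ = (∑ z, (lazyProb G n0 x z - δ)) * (m + (1 - q) ^ r) := by rw [Finset.sum_mul]
          _ = (1 - q) * (m + (1 - q) ^ r) := by
              rw [Finset.sum_sub_distrib, lazyProb_row G hreg hd, Finset.sum_const, card_univ,
                nsmul_eq_mul, hq, hKdef]
              ring_nf
      have hB : (1 - q) * m ≤ ∑ z, (lazyProb G n0 x' z - δ) * lazyProb G (r * n0) z y := by
        calc (1 - q) * m = (∑ z, (lazyProb G n0 x' z - δ)) * m := by
              rw [Finset.sum_sub_distrib, lazyProb_row G hreg hd, Finset.sum_const, card_univ,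
                nsmul_eq_mul, hq, hKdef]
              ring_nf
          _ = ∑ z, (lazyProb G n0 x' z - δ) * m := by rw [Finset.sum_mul]
          _ ≤ _ := Finset.sum_le_sum fun z _ =>
              mul_le_mul_of_nonneg_left (hlb z) (by have := hδle x' z; linarith)
      have : (1 - q) * (m + (1 - q) ^ r) - (1 - q) * m = (1 - q) ^ (r + 1) := by ring
      linarith
  obtain ⟨r, hr⟩ : ∃ r : ℕ, (1 - q) ^ r ≤ 1 / (4 * K) := by
    obtain ⟨r, hr⟩ := exists_pow_lt_of_lt_one (x := 1 / (4 * K)) (by positivity)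
      (by linarith : 1 - q < 1)
    exact ⟨r, hr.le⟩
  refine ⟨r * n0, fun x y => ?_⟩
  have hcol := lazyProb_col G hreg hd (r * n0) y
  have hdiff : K * lazyProb G (r * n0) x y - 1
      = ∑ x' : V, (lazyProb G (r * n0) x y - lazyProb G (r * n0) x' y) := by
    rw [Finset.sum_sub_distrib, hcol, Finset.sum_const, card_univ, nsmul_eq_mul]
  rw [abs_le]
  constructor
  · have : ∑ x' : V, (lazyProb G (r * n0) x' y - lazyProb G (r * n0) x y)
        ≤ ∑ _x' : V, (1 - q) ^ r := Finset.sum_le_sum fun x' _ => contr r x' x y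
    rw [Finset.sum_const, card_univ, nsmul_eq_mul] at this
    have h2 : K * (1 - q) ^ r ≤ K * (1 / (4 * K)) := by
      exact mul_le_mul_of_nonneg_left hr hK.le
    have h3 : K * (1 / (4 * K)) = 1 / 4 := by field_simp
    have h4 : ∑ x' : V, (lazyProb G (r * n0) x' y - lazyProb G (r * n0) x y)
        = -(K * lazyProb G (r * n0) x y - 1) := by
      rw [Finset.sum_sub_distrib, hcol, Finset.sum_const, card_univ, nsmul_eq_mul]; ring
    rw [h4] at this
    linarith
  · have : ∑ x' : V, (lazyProb G (r * n0) x y - lazyProb G (r * n0) x' y)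
        ≤ ∑ _x' : V, (1 - q) ^ r := Finset.sum_le_sum fun x' _ => contr r x x' y
    rw [Finset.sum_const, card_univ, nsmul_eq_mul] at this
    have h2 : K * (1 - q) ^ r ≤ K * (1 / (4 * K)) := mul_le_mul_of_nonneg_left hr hK.le
    have h3 : K * (1 / (4 * K)) = 1 / 4 := by field_simp
    rw [← hdiff] at this
    linarith

lemma statDist_eq (hreg : G.IsRegularOfDegree d) (hd : 0 < d) (x : V) :
    statDist G x = 1 / (Fintype.card V : ℝ) := by
  have hsum : ∑ v : V, G.degree v = 2 * G.edgeFinset.card :=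
    G.sum_degrees_eq_twice_card_edges
  have hsum2 : Fintype.card V * d = 2 * G.edgeFinset.card := by
    rw [← hsum]
    simp [hreg _, Finset.sum_const, card_univ, mul_comm]
  unfold statDist
  rw [hreg x]
  have hKpos : (0:ℝ) < (Fintype.card V : ℝ) := by
    have := Fintype.card_pos (α := V); positivity
  have h2 : (2 * (G.edgeFinset.card : ℝ)) = (Fintype.card V : ℝ) * d := by
    exact_mod_cast hsum2.symm
  rw [h2]
  have hdr : (d : ℝ) ≠ 0 := Nat.cast_ne_zero.mpr hd.ne'
  field_simp

lemma tmix_bound (hconn : G.Connected) (hreg : G.IsRegularOfDegree d) (hd : 0 < d)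
    {n : ℕ} (hn : tmix G ≤ n) (x y : V) :
    |(Fintype.card V : ℝ) * lazyProb G n x y - 1| ≤ 1 / 4 := by
  classical
  set K : ℝ := (Fintype.card V : ℝ) with hKdef
  have hK : 0 < K := by have := Fintype.card_pos (α := V); positivity
  have hrephrase : ∀ m : ℕ,
      (m ∈ {n : ℕ | ∀ x y : V, |lazyProb G n x y / statDist G y - 1| ≤ 1 / 4}) ↔
        ∀ x y : V, |K * lazyProb G m x y - 1| ≤ 1 / 4 := by
    intro m
    simp only [Set.mem_setOf_eq]
    constructor
    · intro h x y
      have := h x y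
      rw [statDist_eq G hreg hd, div_div_eq_mul_div, div_one] at this
      rwa [mul_comm]
    · intro h x y
      have := h x y
      rw [statDist_eq G hreg hd, div_div_eq_mul_div, div_one, mul_comm]
      exact this
  have hne : {n : ℕ | ∀ x y : V, |lazyProb G n x y / statDist G y - 1| ≤ 1 / 4}.Nonempty := by
    obtain ⟨n', hn'⟩ := exists_mix G hconn hreg hd
    exact ⟨n', (hrephrase n').mpr hn'⟩
  have htm : ∀ x y : V, |K * lazyProb G (tmix G) x y - 1| ≤ 1 / 4 :=
    (hrephrase _).mp (Nat.sInf_mem hne)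
  have hsplit : n = (n - tmix G) + tmix G := (Nat.sub_add_cancel hn).symm
  rw [hsplit, lazyProb_chapman]
  have heq : K * (∑ z, lazyProb G (n - tmix G) x z * lazyProb G (tmix G) z y) - 1
      = ∑ z, lazyProb G (n - tmix G) x z * (K * lazyProb G (tmix G) z y - 1) := by
    rw [Finset.mul_sum]
    have : ∑ z, lazyProb G (n - tmix G) x z * (K * lazyProb G (tmix G) z y - 1)
        = ∑ z, (K * (lazyProb G (n - tmix G) x z * lazyProb G (tmix G) z y)
            - lazyProb G (n - tmix G) x z) := Finset.sum_congr rfl fun z _ => by ring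
    rw [this, Finset.sum_sub_distrib, lazyProb_row G hreg hd]
  rw [heq]
  calc |∑ z, lazyProb G (n - tmix G) x z * (K * lazyProb G (tmix G) z y - 1)|
      ≤ ∑ z, |lazyProb G (n - tmix G) x z * (K * lazyProb G (tmix G) z y - 1)| :=
        Finset.abs_sum_le_sum_abs _ _
    _ ≤ ∑ z, lazyProb G (n - tmix G) x z * (1/4) := by
        refine Finset.sum_le_sum fun z _ => ?_
        rw [abs_mul, abs_of_nonneg (lazyProb_nonneg G _ x z)]
        exact mul_le_mul_of_nonneg_left (htm z y) (lazyProb_nonneg G _ x z)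
    _ = 1 / 4 := by rw [← Finset.sum_mul, lazyProb_row G hreg hd, one_mul]

lemma lazyProb_diag_le (hconn : G.Connected) (hreg : G.IsRegularOfDegree d) (hd : 0 < d)
    {n : ℕ} (hn : tmix G ≤ n) (y : V) :
    lazyProb G n y y ≤ (5 / 4) / (Fintype.card V : ℝ) := by
  have h := tmix_bound G hconn hreg hd hn y y
  have hK : (0:ℝ) < (Fintype.card V : ℝ) := by have := Fintype.card_pos (α := V); positivity
  rw [abs_le] at h
  rw [le_div_iff₀ hK, mul_comm]
  linarith [h.2]
end Mixing

section Marginal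
variable (G : SimpleGraph V) [DecidableRel G.Adj]

/-- Path weight written as a product over `Fin n`. -/
noncomputable def myW (n : ℕ) (γ : Fin (n + 1) → V) : ℝ :=
  ∏ i : Fin n, lazyStep G (γ i.castSucc) (γ i.succ)

lemma myW_nonneg (n : ℕ) (γ : Fin (n + 1) → V) : 0 ≤ myW G n γ :=
  Finset.prod_nonneg fun i _ => lazyStep_nonneg G _ _

lemma extPath_eq_of_le {N : ℕ} (γ : Fin (N + 1) → V) {j : ℕ} (h : j ≤ N) :
    extPath N γ j = γ ⟨j, Nat.lt_succ_of_le h⟩ := by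
  unfold extPath
  exact congrArg γ (Fin.ext (by simpa using min_eq_left h))

lemma pathWeight_eq_myW (N : ℕ) (γ : Fin (N + 1) → V) :
    pathWeight G N γ = myW G N γ := by
  unfold pathWeight myW
  rw [← Fin.prod_univ_eq_prod_range
    (fun i => lazyStep G (extPath N γ i) (extPath N γ (i + 1))) N]
  refine Finset.prod_congr rfl fun i _ => ?_
  congr 1
  · rw [extPath_eq_of_le γ (le_of_lt i.isLt)]
    exact congrArg γ (Fin.ext rfl)
  · rw [extPath_eq_of_le γ (Nat.succ_le_of_lt i.isLt)]
    exact congrArg γ (Fin.ext rfl)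

lemma myW_cons (n : ℕ) (x : V) (ρ : Fin (n + 1) → V) :
    myW G (n + 1) (Fin.cons x ρ) = lazyStep G x (ρ 0) * myW G n ρ := by
  unfold myW
  rw [Fin.prod_univ_succ]
  congr 1

lemma myW_snoc (n : ℕ) (γ : Fin (n + 1) → V) (v : V) :
    myW G (n + 1) (Fin.snoc γ v) = myW G n γ * lazyStep G (γ (Fin.last n)) v := by
  unfold myW
  rw [Fin.prod_univ_castSucc]
  congr 1
  · refine Finset.prod_congr rfl fun i _ => ?_
    congr 1
    · rw [Fin.snoc_castSucc]
    · rw [Fin.succ_castSucc, Fin.snoc_castSucc]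
  · congr 1
    · rw [Fin.snoc_castSucc]
    · rw [Fin.succ_last, Fin.snoc_last]

lemma sum_cons_decomp (n : ℕ) (F : (Fin (n + 2) → V) → ℝ) :
    ∑ γ : Fin (n + 2) → V, F γ = ∑ x : V, ∑ ρ : Fin (n + 1) → V, F (Fin.cons x ρ) := by
  rw [← Equiv.sum_comp (Fin.consEquiv (fun _ : Fin (n + 2) => V)) F, Fintype.sum_prod_type]
  rfl

lemma sum_snoc_decomp (n : ℕ) (F : (Fin (n + 2) → V) → ℝ) :
    ∑ γ : Fin (n + 2) → V, F γ = ∑ ρ : Fin (n + 1) → V, ∑ v : V, F (Fin.snoc ρ v) := by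
  let e : ((Fin (n + 1) → V) × V) ≃ (Fin (n + 2) → V) :=
    { toFun := fun p => Fin.snoc p.1 p.2
      invFun := fun γ => (Fin.init γ, γ (Fin.last (n + 1)))
      left_inv := fun p => by simp [Fin.init_snoc, Fin.snoc_last]
      right_inv := fun γ => Fin.snoc_init_self γ }
  rw [← Equiv.sum_comp e F, Fintype.sum_prod_type]
  rfl
end Marginal

section Marginal2
variable (G : SimpleGraph V) [DecidableRel G.Adj]
variable {d : ℕ} (hreg : G.IsRegularOfDegree d) (hd : 0 < d)

include hreg hd in
lemma tail_elim (n : ℕ) (g : V → ℝ) (F : (Fin (n + 1) → V) → ℝ) :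
    ∑ γ : Fin (n + 2) → V, g (γ 0) * myW G (n + 1) γ * F (γ ∘ Fin.castSucc)
      = ∑ γ : Fin (n + 1) → V, g (γ 0) * myW G n γ * F γ := by
  rw [sum_snoc_decomp]
  refine Finset.sum_congr rfl fun ρ _ => ?_
  have h0 : ∀ v : V, (Fin.snoc ρ v : Fin (n + 2) → V) 0 = ρ 0 := by
    intro v
    rw [show (0 : Fin (n + 2)) = Fin.castSucc 0 by rw [Fin.castSucc_zero], Fin.snoc_castSucc]
  have hcomp : ∀ v : V, (Fin.snoc ρ v : Fin (n + 2) → V) ∘ Fin.castSucc = ρ := by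
    intro v; funext i; simp
  calc ∑ v : V, g ((Fin.snoc ρ v : Fin (n + 2) → V) 0) * myW G (n + 1) (Fin.snoc ρ v)
        * F ((Fin.snoc ρ v : Fin (n + 2) → V) ∘ Fin.castSucc)
      = ∑ v : V, g (ρ 0) * myW G n ρ * F ρ * lazyStep G (ρ (Fin.last n)) v := by
        refine Finset.sum_congr rfl fun v _ => ?_
        rw [h0 v, hcomp v, myW_snoc]
        ring
    _ = g (ρ 0) * myW G n ρ * F ρ := by
        rw [← Finset.mul_sum, lazyStep_row G hreg hd, mul_one]

include hreg hd in
lemma sum_end : ∀ (n : ℕ) (g : V → ℝ) (h : V → V → ℝ),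
    ∑ γ : Fin (n + 1) → V, g (γ 0) * myW G n γ * h (γ 0) (γ (Fin.last n))
      = ∑ x : V, ∑ z : V, g x * lazyProb G n x z * h x z := by
  intro n
  induction n with
  | zero =>
    intro g h
    rw [← Equiv.sum_comp (Equiv.funUnique (Fin 1) V).symm
      (fun γ : Fin 1 → V => g (γ 0) * myW G 0 γ * h (γ 0) (γ (Fin.last 0)))]
    simp [myW, lazyProb, Equiv.funUnique]
  | succ n ih =>
    intro g h
    rw [sum_cons_decomp]
    have inner : ∀ x : V,
        (∑ ρ : Fin (n + 1) → V, g ((Fin.cons x ρ : Fin (n+2) → V) 0)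
          * myW G (n+1) (Fin.cons x ρ)
          * h ((Fin.cons x ρ : Fin (n+2) → V) 0) ((Fin.cons x ρ : Fin (n+2) → V) (Fin.last (n+1))))
        = ∑ u : V, ∑ z : V, lazyStep G x u * lazyProb G n u z * (g x * h x z) := by
      intro x
      rw [← ih (fun u => lazyStep G x u) (fun _ z => g x * h x z)]
      refine Finset.sum_congr rfl fun ρ _ => ?_
      rw [Fin.cons_zero, myW_cons, ← Fin.succ_last, Fin.cons_succ]
      ring
    rw [Finset.sum_congr rfl fun x _ => inner x]
    refine Finset.sum_congr rfl fun x _ => ?_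
    rw [Finset.sum_comm]
    refine Finset.sum_congr rfl fun z _ => ?_
    have : lazyProb G (n + 1) x z = ∑ u : V, lazyStep G x u * lazyProb G n u z := rfl
    rw [this, Finset.mul_sum, Finset.sum_mul]
    refine Finset.sum_congr rfl fun u _ => by ring

include hreg hd in
lemma sum_two : ∀ (j n : ℕ) (hn : j ≤ n) (g : V → ℝ) (f : V → V → ℝ),
    ∑ γ : Fin (n + 1) → V, g (γ 0) * myW G n γ
        * f (γ ⟨j, Nat.lt_succ_of_le hn⟩) (γ (Fin.last n))
      = ∑ y : V, ∑ z : V, (∑ x : V, g x * lazyProb G j x y) * lazyProb G (n - j) y z * f y z := by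
  intro j
  induction j with
  | zero =>
    intro n hn g f
    have := sum_end G hreg hd n g f
    rw [show (⟨0, Nat.lt_succ_of_le hn⟩ : Fin (n+1)) = 0 from rfl, this]
    refine Finset.sum_congr rfl fun y _ => ?_
    rw [Nat.sub_zero]
    refine Finset.sum_congr rfl fun z _ => ?_
    have : (∑ x : V, g x * lazyProb G 0 x y) = g y := by
      simp [lazyProb, mul_ite]
    rw [this]
  | succ j ih =>
    intro n hn g f
    obtain ⟨m, rfl⟩ : ∃ m, n = m + 1 := ⟨n - 1, by omega⟩
    have hjm : j ≤ m := by omega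
    rw [sum_cons_decomp]
    have inner : ∀ x : V,
        (∑ ρ : Fin (m + 1) → V, g ((Fin.cons x ρ : Fin (m+2) → V) 0)
          * myW G (m+1) (Fin.cons x ρ)
          * f ((Fin.cons x ρ : Fin (m+2) → V) ⟨j+1, Nat.lt_succ_of_le hn⟩)
              ((Fin.cons x ρ : Fin (m+2) → V) (Fin.last (m+1))))
        = ∑ y : V, ∑ z : V,
            (∑ u : V, lazyStep G x u * lazyProb G j u y) * lazyProb G (m - j) y z
              * (g x * f y z) := by
      intro x
      rw [← ih m hjm (fun u => lazyStep G x u) (fun y z => g x * f y z)]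
      refine Finset.sum_congr rfl fun ρ _ => ?_
      rw [Fin.cons_zero, myW_cons, ← Fin.succ_last, Fin.cons_succ,
        show (⟨j+1, Nat.lt_succ_of_le hn⟩ : Fin (m+2)) = Fin.succ ⟨j, Nat.lt_succ_of_le hjm⟩
          from (Fin.succ_mk _ _ _).symm, Fin.cons_succ]
      ring
    rw [Finset.sum_congr rfl fun x _ => inner x]
    rw [Finset.sum_comm]
    refine Finset.sum_congr rfl fun y _ => ?_
    rw [Finset.sum_comm]
    refine Finset.sum_congr rfl fun z _ => ?_
    have hsub : m + 1 - (j + 1) = m - j := by omega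
    rw [hsub]
    have hPj : ∀ x : V, lazyProb G (j + 1) x y
        = ∑ u : V, lazyStep G x u * lazyProb G j u y := fun _ => rfl
    calc ∑ x : V, (∑ u : V, lazyStep G x u * lazyProb G j u y) * lazyProb G (m - j) y z
            * (g x * f y z)
        = ∑ x : V, g x * lazyProb G (j + 1) x y * (lazyProb G (m - j) y z * f y z) := by
          refine Finset.sum_congr rfl fun x _ => ?_
          rw [hPj x]; ring
      _ = (∑ x : V, g x * lazyProb G (j + 1) x y) * (lazyProb G (m - j) y z * f y z) := by
          rw [Finset.sum_mul]
      _ = (∑ x : V, g x * lazyProb G (j + 1) x y) * lazyProb G (m - j) y z * f y z := by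
          ring

end Marginal2

section ExpPair
variable (G : SimpleGraph V) [DecidableRel G.Adj]
variable {d : ℕ} (hreg : G.IsRegularOfDegree d) (hd : 0 < d)

include hreg hd in
lemma reduce_sum (j k : ℕ) (hjk : j ≤ k) (f : V → V → ℝ) :
    ∀ N (hk : k ≤ N),
      ∑ γ : Fin (N + 1) → V, statDist G (γ 0) * myW G N γ
          * f (γ ⟨j, Nat.lt_succ_of_le (hjk.trans hk)⟩) (γ ⟨k, Nat.lt_succ_of_le hk⟩)
        = ∑ γ : Fin (k + 1) → V, statDist G (γ 0) * myW G k γ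
            * f (γ ⟨j, Nat.lt_succ_of_le hjk⟩) (γ ⟨k, Nat.lt_succ_of_le le_rfl⟩) := by
  intro N hk
  induction N, hk using Nat.le_induction with
  | base => rfl
  | succ N hN ih =>
    rw [← ih]
    exact tail_elim G hreg hd N (statDist G)
      (fun ρ : Fin (N + 1) → V =>
        f (ρ ⟨j, Nat.lt_succ_of_le (hjk.trans hN)⟩) (ρ ⟨k, Nat.lt_succ_of_le hN⟩))

include hreg hd in
lemma exp_pair (j k N : ℕ) (hjk : j ≤ k) (hkN : k ≤ N) (f : V → V → ℝ) :
    walkExpStat G N (fun w => f (w j) (w k))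
      = ∑ y : V, ∑ z : V,
          (1 / (Fintype.card V : ℝ)) * lazyProb G (k - j) y z * f y z := by
  unfold walkExpStat
  have h1 : ∀ γ : Fin (N + 1) → V,
      statDist G (extPath N γ 0) * pathWeight G N γ * f (extPath N γ j) (extPath N γ k)
        = statDist G (γ 0) * myW G N γ
            * f (γ ⟨j, Nat.lt_succ_of_le (hjk.trans hkN)⟩) (γ ⟨k, Nat.lt_succ_of_le hkN⟩) := by
    intro γ
    rw [extPath_eq_of_le γ (Nat.zero_le N), extPath_eq_of_le γ (hjk.trans hkN),
      extPath_eq_of_le γ hkN, pathWeight_eq_myW]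
    rfl
  rw [Finset.sum_congr rfl fun γ _ => h1 γ, reduce_sum G hreg hd j k hjk f N hkN]
  have h2 : (∑ γ : Fin (k + 1) → V, statDist G (γ 0) * myW G k γ
        * f (γ ⟨j, Nat.lt_succ_of_le hjk⟩) (γ ⟨k, Nat.lt_succ_of_le le_rfl⟩))
      = ∑ y : V, ∑ z : V,
          (∑ x : V, statDist G x * lazyProb G j x y) * lazyProb G (k - j) y z * f y z :=
    sum_two G hreg hd j k hjk (statDist G) f
  rw [h2]
  refine Finset.sum_congr rfl fun y _ => Finset.sum_congr rfl fun z _ => ?_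
  have h3 : (∑ x : V, statDist G x * lazyProb G j x y) = 1 / (Fintype.card V : ℝ) := by
    calc ∑ x : V, statDist G x * lazyProb G j x y
        = ∑ x : V, (1 / (Fintype.card V : ℝ)) * lazyProb G j x y :=
          Finset.sum_congr rfl fun x _ => by rw [statDist_eq G hreg hd]
      _ = (1 / (Fintype.card V : ℝ)) * ∑ x : V, lazyProb G j x y := by rw [Finset.mul_sum]
      _ = 1 / (Fintype.card V : ℝ) := by rw [lazyProb_col G hreg hd, mul_one]
  rw [h3]

include hreg hd in
lemma exp_indicator (hconn : G.Connected) (j k N : ℕ) (hjk : j ≤ k) (hkN : k ≤ N)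
    (htm : tmix G ≤ k - j) :
    walkExpStat G N (fun w => if w j = w k then (1 : ℝ) else 0)
      ≤ 2 / (Fintype.card V : ℝ) := by
  have hK : (0:ℝ) < (Fintype.card V : ℝ) := by
    have := Fintype.card_pos (α := V); positivity
  rw [exp_pair G hreg hd j k N hjk hkN (fun y z => if y = z then (1:ℝ) else 0)]
  have h1 : ∀ y : V, (∑ z : V,
      (1 / (Fintype.card V : ℝ)) * lazyProb G (k - j) y z * (if y = z then (1:ℝ) else 0))
        = (1 / (Fintype.card V : ℝ)) * lazyProb G (k - j) y y := by
    intro y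
    rw [Finset.sum_eq_single y]
    · simp
    · intro z _ hz
      rw [if_neg fun h => hz h.symm, mul_zero]
    · intro h; exact absurd (mem_univ y) h
  rw [Finset.sum_congr rfl fun y _ => h1 y]
  calc ∑ y : V, (1 / (Fintype.card V : ℝ)) * lazyProb G (k - j) y y
      ≤ ∑ _y : V, (1 / (Fintype.card V : ℝ)) * ((5/4) / (Fintype.card V : ℝ)) := by
        refine Finset.sum_le_sum fun y _ => ?_
        exact mul_le_mul_of_nonneg_left
          (lazyProb_diag_le G hconn hreg hd htm y) (by positivity)
    _ = (5/4) / (Fintype.card V : ℝ) := by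
        rw [Finset.sum_const, card_univ, nsmul_eq_mul]
        field_simp
    _ ≤ 2 / (Fintype.card V : ℝ) := by
        gcongr
        norm_num

end ExpPair

section Combinatorial

lemma neseg_last (w : ℕ → V) (a : ℕ) : ∀ k : ℕ, a + k ∈ NEseg w a k := by
  intro k
  induction k with
  | zero => simp [NEseg]
  | succ k _ =>
    unfold NEseg
    exact Finset.mem_union_right _ (Finset.mem_singleton.mpr rfl)

lemma neloc_sep (w : ℕ → V) (s a b : ℕ) {j k : ℕ} (hj : j ∈ NEloc w s a b)
    (h1 : j + 1 ≤ k) (h2 : k ≤ j + s) : w j ≠ w k := by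
  classical
  intro heq
  rw [NEloc, Finset.mem_filter] at hj
  obtain ⟨hjI, hcond⟩ := hj
  rw [Finset.mem_Icc] at hjI
  have hsj : s ≤ j := le_trans (Nat.le_add_left s a) hjI.1
  have hmem1 : w j ∈ walkRange w (NEseg w (j - s) s) := by
    refine Finset.mem_image.mpr ⟨j, ?_, rfl⟩
    have := neseg_last w (j - s) s
    rwa [Nat.sub_add_cancel hsj] at this
  have hmem2 : w j ∈ walkRange w (Finset.Icc (j + 1) (j + s)) :=
    Finset.mem_image.mpr ⟨k, Finset.mem_Icc.mpr ⟨h1, h2⟩, heq.symm⟩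
  have : w j ∈ (walkRange w (NEseg w (j - s) s) ∩ walkRange w (Finset.Icc (j + 1) (j + s))) :=
    Finset.mem_inter.mpr ⟨hmem1, hmem2⟩
  rw [hcond] at this
  exact absurd this (Finset.notMem_empty _)

lemma card_le_image_add_pairs (S : Finset ℕ) (w : ℕ → V) :
    S.card ≤ (S.image w).card
      + ((S ×ˢ S).filter (fun p => p.1 < p.2 ∧ w p.1 = w p.2)).card := by
  classical
  set T := (S ×ˢ S).filter (fun p => p.1 < p.2 ∧ w p.1 = w p.2) with hT
  have h1 : S.card = ∑ v ∈ S.image w, (S.filter (fun a => w a = v)).card :=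
    Finset.card_eq_sum_card_image w S
  have h2 : T.card = ∑ v ∈ S.image w, (T.filter (fun p => w p.1 = v)).card := by
    refine Finset.card_eq_sum_card_fiberwise fun p hp => ?_
    rw [hT, Finset.mem_coe, Finset.mem_filter, Finset.mem_product] at hp
    exact Finset.mem_coe.mpr (Finset.mem_image_of_mem w hp.1.1)
  have h3 : ∀ v ∈ S.image w,
      (S.filter (fun a => w a = v)).card ≤ 1 + (T.filter (fun p => w p.1 = v)).card := by
    intro v hv
    obtain ⟨a, ha, hav⟩ := Finset.mem_image.mp hv
    have hne : (S.filter (fun a => w a = v)).Nonempty :=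
      ⟨a, Finset.mem_filter.mpr ⟨ha, hav⟩⟩
    set F := S.filter (fun a => w a = v) with hF
    set M := F.max' hne with hM
    have hcard : (F.erase M).card + 1 = F.card := Finset.card_erase_add_one (F.max'_mem hne)
    suffices hinj : (F.erase M).card ≤ (T.filter (fun p => w p.1 = v)).card by omega
    refine Finset.card_le_card_of_injOn (fun j => (j, M)) ?_ ?_
    · intro j hj
      rw [Finset.mem_coe, Finset.mem_erase] at hj
      obtain ⟨hjM, hjF⟩ := hj
      have hjlt : j < M := lt_of_le_of_ne (F.le_max' j hjF) hjM
      rw [Finset.mem_filter] at hjF; rw [Finset.mem_coe, Finset.mem_filter]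
      have hMF := Finset.mem_filter.mp (F.max'_mem hne)
      refine ⟨Finset.mem_filter.mpr ⟨Finset.mem_product.mpr ⟨hjF.1, hMF.1⟩,
        hjlt, ?_⟩, hjF.2⟩
      rw [hjF.2, hMF.2]
    · intro j _ j' _ hjj'
      exact (Prod.mk.injEq _ _ _ _ ▸ hjj').1
  calc S.card = ∑ v ∈ S.image w, (S.filter (fun a => w a = v)).card := h1
    _ ≤ ∑ v ∈ S.image w, (1 + (T.filter (fun p => w p.1 = v)).card) :=
        Finset.sum_le_sum h3
    _ = (S.image w).card + ∑ v ∈ S.image w, (T.filter (fun p => w p.1 = v)).card := by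
        rw [Finset.sum_add_distrib, Finset.sum_const, smul_eq_mul, mul_one]
    _ = (S.image w).card + T.card := by rw [← h2]
end Combinatorial

lemma det_bound (w : ℕ → V) (s a b : ℕ) :
    ((NEloc w s a b).card : ℝ)
      ≤ ((walkRange w (NEloc w s a b)).card : ℝ)
        + ∑ p ∈ (Finset.Icc (a + s) (b - s) ×ˢ Finset.Icc (a + s) (b - s)).filter
            (fun p => p.1 + s + 1 ≤ p.2),
            (if w p.1 = w p.2 then (1 : ℝ) else 0) := by
  classical
  set S := NEloc w s a b with hS
  set P := (Finset.Icc (a + s) (b - s) ×ˢ Finset.Icc (a + s) (b - s)).filter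
      (fun p => p.1 + s + 1 ≤ p.2) with hP
  set T := (S ×ˢ S).filter (fun p => p.1 < p.2 ∧ w p.1 = w p.2) with hT
  have hSsub : S ⊆ Finset.Icc (a + s) (b - s) := by
    rw [hS, NEloc]
    exact Finset.filter_subset _ _
  have hsub : T ⊆ P.filter (fun p => w p.1 = w p.2) := by
    intro p hp
    rw [hT, Finset.mem_filter, Finset.mem_product] at hp
    obtain ⟨⟨hp1, hp2⟩, hlt, heq⟩ := hp
    have hsep : p.1 + s + 1 ≤ p.2 := by
      by_contra hcon
      exact neloc_sep w s a b hp1 hlt (by omega) heq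
    rw [Finset.mem_filter, hP, Finset.mem_filter, Finset.mem_product]
    exact ⟨⟨⟨hSsub hp1, hSsub hp2⟩, hsep⟩, heq⟩
  have h1 : S.card ≤ (S.image w).card + T.card := card_le_image_add_pairs S w
  have h2 : T.card ≤ (P.filter (fun p => w p.1 = w p.2)).card := Finset.card_le_card hsub
  have h3 : (∑ p ∈ P, if w p.1 = w p.2 then (1 : ℝ) else 0)
      = ((P.filter (fun p => w p.1 = w p.2)).card : ℝ) :=
    Finset.sum_boole _ _
  have h4 : walkRange w S = S.image w := rfl
  rw [h4, h3]
  have := h1.trans (Nat.add_le_add_left h2 _)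
  exact_mod_cast this

/-- Expected number of distinct points of the locally non-erased path
versus the number of locally non-erased indices. -/
theorem expected_range_of_locally_nonerased_lower_bound
    (G : SimpleGraph V) [DecidableRel G.Adj] (hconn : G.Connected)
    (hcard : 2 ≤ Fintype.card V) (d : ℕ) (hreg : G.IsRegularOfDegree d)
    (s : ℕ) (hs : tmix G + 1 ≤ s)
    (aA bA N : ℕ) (hA : aA ≤ bA)
    (hAcard : 2 * s + 1 ≤ (Finset.Icc aA bA).card) (hNA : bA ≤ N) :
    walkExpStat G N (fun w => ((NEloc w s aA bA).card : ℝ)) -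
        2 * (((Finset.Icc aA bA).card : ℝ) - 2 * s) ^ 2 / (Fintype.card V : ℝ) ≤
      walkExpStat G N (fun w => ((walkRange w (NEloc w s aA bA)).card : ℝ)) := by
  classical
  have hd : 0 < d := by
    obtain ⟨x, y, hxy⟩ := Fintype.exists_pair_of_one_lt_card (by omega : 1 < Fintype.card V)
    obtain ⟨W⟩ := hconn.preconnected x y
    cases W with
    | nil => exact absurd rfl hxy
    | cons h _ =>
      have : 0 < G.degree x := (G.degree_pos_iff_exists_adj x).mpr ⟨_, h⟩
      rwa [hreg x] at this
  have hK : (0 : ℝ) < (Fintype.card V : ℝ) := by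
    have := Fintype.card_pos (α := V); positivity
  set P := (Finset.Icc (aA + s) (bA - s) ×ˢ Finset.Icc (aA + s) (bA - s)).filter
      (fun p => p.1 + s + 1 ≤ p.2) with hP
  have hc : ∀ γ : Fin (N + 1) → V, 0 ≤ statDist G (extPath N γ 0) * pathWeight G N γ := by
    intro γ
    apply mul_nonneg
    · unfold statDist
      positivity
    · exact Finset.prod_nonneg fun i _ => lazyStep_nonneg G _ _
  have key : walkExpStat G N (fun w => ((NEloc w s aA bA).card : ℝ))
      ≤ walkExpStat G N (fun w => ((walkRange w (NEloc w s aA bA)).card : ℝ))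
        + ∑ p ∈ P, walkExpStat G N (fun w => if w p.1 = w p.2 then (1 : ℝ) else 0) := by
    unfold walkExpStat
    calc ∑ γ : Fin (N + 1) → V, statDist G (extPath N γ 0) * pathWeight G N γ
            * ((NEloc (extPath N γ) s aA bA).card : ℝ)
        ≤ ∑ γ : Fin (N + 1) → V, statDist G (extPath N γ 0) * pathWeight G N γ
            * (((walkRange (extPath N γ) (NEloc (extPath N γ) s aA bA)).card : ℝ)
              + ∑ p ∈ P, (if extPath N γ p.1 = extPath N γ p.2 then (1 : ℝ) else 0)) := by
          refine Finset.sum_le_sum fun γ _ => ?_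
          exact mul_le_mul_of_nonneg_left (det_bound (extPath N γ) s aA bA) (hc γ)
      _ = ∑ γ : Fin (N + 1) → V, (statDist G (extPath N γ 0) * pathWeight G N γ
            * ((walkRange (extPath N γ) (NEloc (extPath N γ) s aA bA)).card : ℝ)
          + ∑ p ∈ P, statDist G (extPath N γ 0) * pathWeight G N γ
              * (if extPath N γ p.1 = extPath N γ p.2 then (1 : ℝ) else 0)) := by
          refine Finset.sum_congr rfl fun γ _ => ?_
          rw [mul_add, Finset.mul_sum]
      _ = _ := by
          rw [Finset.sum_add_distrib]
          congr 1
          rw [Finset.sum_comm]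
  have hcardIcc : (Finset.Icc aA bA).card = bA + 1 - aA := Nat.card_Icc aA bA
  set n := (Finset.Icc (aA + s) (bA - s)).card with hn
  have hnval : n = bA - s + 1 - (aA + s) := Nat.card_Icc _ _
  have hab : aA + 2 * s ≤ bA := by omega
  have hnA : n + 2 * s = (Finset.Icc aA bA).card := by omega
  have hPsub : P.card ≤ n * n := by
    calc P.card ≤ (Finset.Icc (aA + s) (bA - s) ×ˢ Finset.Icc (aA + s) (bA - s)).card :=
          Finset.card_le_card (Finset.filter_subset _ _)
      _ = n * n := by rw [Finset.card_product]
  have hbound : ∀ p ∈ P,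
      walkExpStat G N (fun w => if w p.1 = w p.2 then (1 : ℝ) else 0)
        ≤ 2 / (Fintype.card V : ℝ) := by
    intro p hp
    rw [hP, Finset.mem_filter, Finset.mem_product, Finset.mem_Icc, Finset.mem_Icc] at hp
    obtain ⟨⟨hp1, hp2⟩, hps⟩ := hp
    refine exp_indicator G hreg hd hconn p.1 p.2 N (by omega) (by omega) (by omega)
  have hsum : ∑ p ∈ P, walkExpStat G N (fun w => if w p.1 = w p.2 then (1 : ℝ) else 0)
      ≤ (P.card : ℝ) * (2 / (Fintype.card V : ℝ)) := by
    have := Finset.sum_le_card_nsmul P _ _ hbound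
    rwa [nsmul_eq_mul] at this
  have hfinal : (P.card : ℝ) * (2 / (Fintype.card V : ℝ))
      ≤ 2 * (((Finset.Icc aA bA).card : ℝ) - 2 * s) ^ 2 / (Fintype.card V : ℝ) := by
    have hcast : ((Finset.Icc aA bA).card : ℝ) - 2 * s = (n : ℝ) := by
      rw [← hnA]; push_cast; ring
    rw [hcast]
    have hPn : (P.card : ℝ) ≤ (n : ℝ) * n := by exact_mod_cast hPsub
    rw [div_eq_mul_inv, div_eq_mul_inv]
    have hinv : (0 : ℝ) ≤ ((Fintype.card V : ℝ))⁻¹ := by positivity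
    nlinarith [hinv, hPn]
  linarith [key, hsum, hfinal]
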